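/- Let A, B ∈ ℂ[X] with B ≠ 0. The polynomial pencil f(z, u) = A(z) + u·B(z) has a multiple root with respect to z for every value u ∈ ℂ — i.e., for every u ∈ ℂ there exists z ∈ ℂ with A(z) + u·B(z) = 0 and A′(z) + u·B′(z) = 0 — if and only if A and B have a common root z* which is a root of multiplicity at least 2 of both A and B, i.e., there exists z* ∈ ℂ with A(z*) = A′(z*) = 0 and B(z*) = B′(z*) = 0. -/

import Mathlib

open Polynomial

/-- If the Wronskian of `A` and `B` vanishes and `B ≠ 0`, then `A` is a constant
multiple of `B`. -/
lemma aux_wronskian_zero_eq_smul (A B : ℂ[X]) (hB : B ≠ 0)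
    (hW : wronskian A B = 0) : ∃ c : ℂ, A = C c * B := by
  by_cases hA : A = 0
  · exact ⟨0, by simp [hA]⟩
  · set g := GCDMonoid.gcd A B with hg
    have hg0 : g ≠ 0 := fun h => hB ((gcd_eq_zero_iff _ _).mp h).2
    obtain ⟨a, hAg⟩ : g ∣ A := gcd_dvd_left A B
    obtain ⟨b, hBg⟩ : g ∣ B := gcd_dvd_right A B
    have ha' : a = A / g := by rw [hAg]; exact (mul_div_cancel_left₀ a hg0).symm
    have hb' : b = B / g := by rw [hBg]; exact (mul_div_cancel_left₀ b hg0).symm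
    have hcop : IsCoprime a b := by
      rw [ha', hb']; exact isCoprime_div_gcd_div_gcd hB
    have hWab : wronskian a b = 0 := by
      have heq : wronskian A B = g ^ 2 * wronskian a b := by
        rw [hAg, hBg, wronskian, wronskian]
        simp only [derivative_mul]
        ring
      rw [heq] at hW
      rcases mul_eq_zero.mp hW with h | h
      · exact absurd (pow_eq_zero_iff (n := 2) (by norm_num) |>.mp h) hg0
      · exact h
    obtain ⟨hda, hdb⟩ := hcop.wronskian_eq_zero_iff.mp hWab
    set ca := a.coeff 0
    set cb := b.coeff 0
    have haC : a = C ca := eq_C_of_derivative_eq_zero hda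
    have hbC : b = C cb := eq_C_of_derivative_eq_zero hdb
    have hb0 : cb ≠ 0 := by
      intro h
      apply hB
      rw [hBg, hbC, h, map_zero, mul_zero]
    refine ⟨ca / cb, ?_⟩
    have key : C cb * C (ca / cb) = C ca := by
      rw [← map_mul]
      congr 1
      field_simp
    calc A = g * a := hAg
      _ = g * C ca := by rw [haC]
      _ = g * (C cb * C (ca / cb)) := by rw [key]
      _ = C (ca / cb) * (g * b) := by rw [hbC]; ring
      _ = C (ca / cb) * B := by rw [← hBg]

/-- The polynomial pencil `f(z,u) = A(z) + u·B(z)` (with `B ≠ 0`)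
has a multiple root in `z` for every value of `u` if and only if `A` and `B`
have a common root which is a root of multiplicity at least 2 of both. -/
theorem pencil_multiple_root_for_all_u_iff_common_double_root
    (A B : ℂ[X]) (hB : B ≠ 0) :
    (∀ u : ℂ, ∃ z : ℂ,
      A.eval z + u * B.eval z = 0 ∧
      (derivative A).eval z + u * (derivative B).eval z = 0)
    ↔ ∃ zs : ℂ,
        A.eval zs = 0 ∧ (derivative A).eval zs = 0 ∧
        B.eval zs = 0 ∧ (derivative B).eval zs = 0 := by
  constructor
  · intro h
    by_cases hW : wronskian A B = 0
    · -- A = c • B; pick u with c + u = 1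
      obtain ⟨c, hc⟩ := aux_wronskian_zero_eq_smul A B hB hW
      obtain ⟨z, h1, h2⟩ := h (1 - c)
      have hdA : derivative A = C c * derivative B := by
        rw [hc, derivative_mul, derivative_C, zero_mul, zero_add]
      rw [hc] at h1
      rw [hdA] at h2
      simp only [eval_mul, eval_C] at h1 h2
      have hBz : B.eval z = 0 := by linear_combination h1
      have hBz' : (derivative B).eval z = 0 := by linear_combination h2
      exact ⟨z, by simp [hc, hBz], by simp [hdA, hBz'], hBz, hBz'⟩
    · by_contra h2
      push_neg at h2
      -- each u gives witness z in roots of B or roots of the wronskian, injectively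
      set f : ℂ → ℂ := fun u => Classical.choose (h u) with hf
      have hspec : ∀ u : ℂ, A.eval (f u) + u * B.eval (f u) = 0 ∧
          (derivative A).eval (f u) + u * (derivative B).eval (f u) = 0 :=
        fun u => Classical.choose_spec (h u)
      set S : Set ℂ := {z | IsRoot B z} ∪ {z | IsRoot (wronskian A B) z} with hS
      have hSfin : S.Finite :=
        (finite_setOf_isRoot hB).union (finite_setOf_isRoot hW)
      have hmem : ∀ u, f u ∈ S := by
        intro u
        obtain ⟨e1, e2⟩ := hspec u
        by_cases hBz : B.eval (f u) = 0
        · exact Or.inl hBz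
        · right
          show (wronskian A B).eval (f u) = 0
          rw [wronskian, eval_sub, eval_mul, eval_mul]
          have hA1 : A.eval (f u) = -u * B.eval (f u) := by linear_combination e1
          have hA2 : (derivative A).eval (f u) = -u * (derivative B).eval (f u) := by
            linear_combination e2
          rw [hA1, hA2]; ring
      have hinj : Set.InjOn f Set.univ := by
        intro u₁ _ u₂ _ hz
        obtain ⟨e1, e2⟩ := hspec u₁
        obtain ⟨e3, e4⟩ := hspec u₂
        rw [hz] at e1 e2
        set z := f u₂
        by_cases hBz : B.eval z = 0
        · have hAz : A.eval z = 0 := by linear_combination e1 - u₁ * hBz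
          by_cases hBz' : (derivative B).eval z = 0
          · have hAz' : (derivative A).eval z = 0 := by linear_combination e2 - u₁ * hBz'
            exact absurd hAz' (fun hh => (h2 z hAz hh hBz) hBz')
          · have : (u₁ - u₂) * (derivative B).eval z = 0 := by linear_combination e2 - e4
            rcases mul_eq_zero.mp this with hh | hh
            · exact sub_eq_zero.mp hh
            · exact absurd hh hBz'
        · have : (u₁ - u₂) * B.eval z = 0 := by linear_combination e1 - e3
          rcases mul_eq_zero.mp this with hh | hh
          · exact sub_eq_zero.mp hh
          · exact absurd hh hBz
      have huniv : (Set.univ : Set ℂ) ⊆ f ⁻¹' S := fun u _ => hmem u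
      have : (Set.univ : Set ℂ).Finite :=
        Set.Finite.subset (hSfin.preimage (hinj.mono (Set.subset_univ _))) huniv
      exact Set.infinite_univ this
  · rintro ⟨zs, h1, h2, h3, h4⟩ u
    exact ⟨zs, by simp [h1, h3], by simp [h2, h4]⟩
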